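/- arXiv:2501.07916 — 6 statements merged into one kernel-verified Lean document; each statement's English description precedes it below -/
import Mathlib

section
/- For every Polish space X (a separable completely metrizable topological space), the path-connectedness relation on X, i.e. the set {(x, y) ∈ X × X : there is a continuous path γ : [0,1] → X with γ(0) = x and γ(1) = y}, is an analytic subset of X × X. -/
/-- The Cantor space `2^ℕ`. -/
abbrev Cantor : Type := ℕ → Fin 2

/-- Eventual equality `E₀` on `2^ℕ`. -/
def E0 (α β : Cantor) : Prop := ∃ m : ℕ, ∀ n ≥ m, α n = β n

/-- Pointwise complement of a binary sequence. -/
def cmpl (α : Cantor) : Cantor := fun n => 1 - α n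

/-- The relation `E₀*`: `α E₀* β` iff `α E₀ β` or `α E₀ β̄`. -/
def E0star (α β : Cantor) : Prop := E0 α β ∨ E0 α (cmpl β)

/-- The relation `Fₙ`: agreement from coordinate `n` onwards. -/
def Frel (n : ℕ) (α β : Cantor) : Prop := ∀ i ≥ n, α i = β i

/-- The pieces `Hₖ` of the Knaster continuum. -/
def Hset (k : ℕ) : Set (ℝ × ℝ) :=
  if k = 0 then
    {p | 0 ≤ p.2 ∧ ∃ c ∈ cantorSet, (p.1 - 1/2)^2 + p.2^2 = (c - 1/2)^2}
  else
    {p | p.2 ≤ 0 ∧ ∃ c ∈ cantorSet ∩ Set.Icc ((2:ℝ)/3^k) (3/3^k),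
      (p.1 - 5/(2*3^k))^2 + p.2^2 = (c - 5/(2*3^k))^2}

/-- The Knaster continuum (buckethandle). -/
def knasterH : Set (ℝ × ℝ) := ⋃ k : ℕ, Hset k

/-- The map `ψ : 2^ℕ → ℝ²` sending `α` to the corresponding Cantor set point on the x-axis. -/
noncomputable def psi (α : Cantor) : ℝ × ℝ := (∑' i : ℕ, 2 * (α i : ℝ) / 3^(i+1), 0)

/-- For every Polish space `X`, the path-connectedness relation on `X`
is an analytic subset of `X × X`. -/
theorem analyticSet_joined (X : Type*) [TopologicalSpace X] [PolishSpace X] :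
    MeasureTheory.AnalyticSet {p : X × X | Joined p.1 p.2} := by
  letI := TopologicalSpace.upgradeIsCompletelyMetrizable X
  have heq : {p : X × X | Joined p.1 p.2} =
      (fun γ : C(unitInterval, X) => (γ 0, γ 1)) '' Set.univ := by
    ext p
    constructor
    · rintro ⟨γ⟩
      exact ⟨γ.toContinuousMap, trivial, by simp⟩
    · rintro ⟨γ, -, h⟩
      refine ⟨⟨γ, ?_, ?_⟩⟩ <;> simp [← h]
  rw [heq]
  exact (isClosed_univ.analyticSet).image_of_continuous
    ((continuous_eval_const 0).prodMk
      (continuous_eval_const 1))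
end

section
/- E₀* is a hyperfinite Borel equivalence relation: defining Rₙ on 2^ℕ by α Rₙ β iff (α Fₙ β or α Fₙ β̄), each Rₙ is a Borel equivalence relation all of whose equivalence classes are finite, the sequence (Rₙ)ₙ is increasing (Rₙ ⊆ Rₙ₊₁ for all n), and E₀* = ⋃ₙ Rₙ. -/
/-- The relation `Rₙ`: `α Rₙ β` iff `α Fₙ β` or `α Fₙ β̄`. -/
def Rrel (n : ℕ) (α β : Cantor) : Prop := Frel n α β ∨ Frel n α (cmpl β)

/-- `E₀*` is a hyperfinite Borel equivalence relation, witnessed by the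
Borel equivalence relations `Rₙ` with finite classes whose increasing union is `E₀*`. -/
theorem E0star_hyperfinite_via_Rrel :
    (∀ n : ℕ, Equivalence (Rrel n)) ∧
    (∀ n : ℕ, MeasurableSet {p : Cantor × Cantor | Rrel n p.1 p.2}) ∧
    (∀ n : ℕ, ∀ α : Cantor, {β : Cantor | Rrel n α β}.Finite) ∧
    (∀ n : ℕ, ∀ α β : Cantor, Rrel n α β → Rrel (n + 1) α β) ∧
    (∀ α β : Cantor, E0star α β ↔ ∃ n : ℕ, Rrel n α β) := by
  have fin2 : ∀ a b : Fin 2, a = 1 - b ↔ b = 1 - a := by decide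
  have fin2' : ∀ a : Fin 2, 1 - (1 - a) = a := by decide
  refine ⟨?_, ?_, ?_, ?_, ?_⟩
  · intro n
    constructor
    · intro α; exact Or.inl fun i _ => rfl
    · rintro α β (h | h)
      · exact Or.inl fun i hi => (h i hi).symm
      · exact Or.inr fun i hi => (fin2 _ _).mp (h i hi)
    · rintro α β γ (h | h) (h' | h')
      · exact Or.inl fun i hi => (h i hi).trans (h' i hi)
      · exact Or.inr fun i hi => (h i hi).trans (h' i hi)
      · refine Or.inr fun i hi => ?_
        rw [h i hi, cmpl]
        show 1 - β i = 1 - γ i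
        rw [h' i hi]
      · refine Or.inl fun i hi => ?_
        rw [h i hi, cmpl]
        show 1 - β i = γ i
        rw [h' i hi, cmpl, fin2']
  · intro n
    have : {p : Cantor × Cantor | Rrel n p.1 p.2} =
        (⋂ i, ⋂ _ : i ≥ n, {p : Cantor × Cantor | p.1 i = p.2 i}) ∪
        (⋂ i, ⋂ _ : i ≥ n, {p : Cantor × Cantor | p.1 i = 1 - p.2 i}) := by
      ext p
      simp only [Set.mem_setOf_eq, Set.mem_union, Set.mem_iInter, Rrel, Frel, cmpl]
    rw [this]
    refine MeasurableSet.union ?_ ?_ <;>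
      refine MeasurableSet.iInter fun i => MeasurableSet.iInter fun _ => ?_
    · show MeasurableSet ((fun p : Cantor × Cantor => (p.1 i, p.2 i)) ⁻¹'
        {q : Fin 2 × Fin 2 | q.1 = q.2})
      apply ((Set.to_countable _).measurableSet).preimage
      fun_prop
    · show MeasurableSet ((fun p : Cantor × Cantor => (p.1 i, p.2 i)) ⁻¹'
        {q : Fin 2 × Fin 2 | q.1 = 1 - q.2})
      apply ((Set.to_countable _).measurableSet).preimage
      fun_prop
  · intro n α
    classical
    refine Set.Finite.subset (Set.finite_range
        (fun v : (Fin n → Fin 2) × Bool => fun i : ℕ =>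
          if h : i < n then v.1 ⟨i, h⟩ else if v.2 then α i else 1 - α i)) ?_
    rintro β (h | h)
    · refine ⟨(fun j => β j.1, true), ?_⟩
      funext i
      by_cases hi : i < n
      · simp [hi]
      · simp only [dif_neg hi, if_true]
        exact h i (Nat.le_of_not_lt hi)
    · refine ⟨(fun j => β j.1, false), ?_⟩
      funext i
      by_cases hi : i < n
      · simp [hi]
      · have hb := (fin2 _ _).mp (h i (Nat.le_of_not_lt hi))
        simp [hi, hb]
  · rintro n α β (h | h)
    · exact Or.inl fun i hi => h i (le_trans (Nat.le_succ n) hi)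
    · exact Or.inr fun i hi => h i (le_trans (Nat.le_succ n) hi)
  · intro α β
    constructor
    · rintro (⟨m, hm⟩ | ⟨m, hm⟩)
      · exact ⟨m, Or.inl hm⟩
      · exact ⟨m, Or.inr hm⟩
    · rintro ⟨m, h | h⟩
      · exact Or.inl ⟨m, h⟩
      · exact Or.inr ⟨m, h⟩
end

section
/- The map f : 2^ℕ → 2^ℕ defined by f(α)(2i) = α(i) and f(α)(2i+1) = 1 for all i ∈ ℕ (i.e. f(α) = (α₀, 1, α₁, 1, α₂, 1, ...)) is continuous, and for all α, β ∈ 2^ℕ, α E₀ β iff f(α) E₀* f(β). In particular, E₀ is Borel reducible to E₀*. -/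
/-- The map interleaving a binary sequence with the constant sequence `1`. -/
def interleaveOne (α : Cantor) : Cantor := fun n => if n % 2 = 0 then α (n / 2) else 1

/-- The map `f(α) = (α₀, 1, α₁, 1, α₂, 1, ...)` is continuous and is a
reduction of `E₀` to `E₀*`; in particular `E₀ ≤_B E₀*`. -/
theorem E0_reducible_E0star :
    Continuous interleaveOne ∧
    ∀ α β : Cantor, E0 α β ↔ E0star (interleaveOne α) (interleaveOne β) := by
  constructor
  · apply continuous_pi
    intro n
    unfold interleaveOne
    by_cases h : n % 2 = 0
    · simp only [h, if_pos]
      exact continuous_apply _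
    · simp only [h, if_neg]
      exact continuous_const
  · intro α β
    constructor
    · rintro ⟨m, hm⟩
      left
      refine ⟨2 * m, fun n hn => ?_⟩
      unfold interleaveOne
      by_cases h : n % 2 = 0
      · simp only [h, if_pos]
        exact hm _ (by omega)
      · simp [h]
    · rintro (⟨m, hm⟩ | ⟨m, hm⟩)
      · refine ⟨m, fun n hn => ?_⟩
        have := hm (2 * n) (by omega)
        simpa [interleaveOne, Nat.mul_div_cancel_left] using this
      · exfalso
        have := hm (2 * m + 1) (by omega)
        simp only [interleaveOne, cmpl] at this
        rw [show (2*m+1)%2 = 1 from by omega] at this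
        simp [interleaveOne, cmpl] at this
end

section
/- E₀* is not smooth: there is no Borel measurable map g : 2^ℕ → ℝ such that for all α, β ∈ 2^ℕ, α E₀* β iff g(α) = g(β). -/
open Filter Topology Set

section Aux

/-- Translation by `v` (coordinatewise addition in `Fin 2`). -/
def transl (v : Cantor) : Cantor → Cantor := fun β i => β i + v i

lemma transl_invol (v β : Cantor) : transl v (transl v β) = β := by
  funext i
  have h : ∀ x w : Fin 2, x + w + w = x := by decide
  exact h (β i) (v i)

lemma continuous_transl (v : Cantor) : Continuous (transl v) :=
  continuous_pi fun i =>
    (continuous_of_discreteTopology (α := Fin 2) (f := fun x => x + v i)).comp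
      (continuous_apply i)

/-- Translation as a homeomorphism. -/
def translHomeo (v : Cantor) : Cantor ≃ₜ Cantor where
  toFun := transl v
  invFun := transl v
  left_inv := transl_invol v
  right_inv := transl_invol v
  continuous_toFun := continuous_transl v
  continuous_invFun := continuous_transl v

lemma residual_neBot : Filter.NeBot (residual Cantor) := by
  rw [Filter.neBot_iff]
  intro h
  have h0 : (∅ : Set Cantor) ∈ residual Cantor := by rw [h]; trivial
  simpa using (dense_of_mem_residual h0).nonempty

lemma isMeagre_iUnion' {ι : Sort*} [Countable ι] {s : ι → Set Cantor}
    (h : ∀ i, IsMeagre (s i)) : IsMeagre (⋃ i, s i) := by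
  unfold IsMeagre
  rw [Set.compl_iUnion]
  exact (countable_iInter_mem).mpr h

lemma finite_level (α : Cantor) (m : ℕ) : {β : Cantor | ∀ n ≥ m, β n = α n}.Finite := by
  rw [← Set.finite_coe_iff]
  refine Finite.of_injective (fun β => (fun i : Fin m => (β : Cantor) i)) ?_
  intro β γ h
  apply Subtype.ext; funext n
  rcases lt_or_ge n m with hn | hn
  · exact congrFun h ⟨n, hn⟩
  · rw [β.2 n hn, γ.2 n hn]

lemma countable_E0class (α : Cantor) : {β : Cantor | E0 β α}.Countable := by
  have h : {β : Cantor | E0 β α} = ⋃ m : ℕ, {β : Cantor | ∀ n ≥ m, β n = α n} := by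
    ext β; simp only [Set.mem_iUnion, Set.mem_setOf_eq]; rfl
  rw [h]
  exact Set.countable_iUnion fun m => (finite_level α m).countable

lemma isMeagre_singleton (x : Cantor) : IsMeagre ({x} : Set Cantor) := by
  have hd : Dense ({x}ᶜ : Set Cantor) := by
    intro z
    rw [mem_closure_iff]
    intro U hU hz
    obtain ⟨I, u, hu, hsub⟩ := isOpen_pi_iff.mp hU z hz
    set N : ℕ := (I.sup id) + 1 with hN
    set y : Cantor := fun i => if i = N then z i + 1 else z i with hy
    have hyU : y ∈ U := by
      apply hsub
      intro i hi
      have hiN : i ≠ N := by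
        have : i ≤ I.sup id := Finset.le_sup (f := id) hi
        omega
      simpa [hy, hiN] using (hu i hi).2
    have hyx : y ≠ x ∨ z ≠ x := by
      by_cases hzx : z = x
      · left
        intro hyxe
        have := congrFun (hyxe.trans hzx.symm) N
        simp only [hy, if_pos rfl] at this
        have h2 : ∀ w : Fin 2, w + 1 ≠ w := by decide
        exact h2 (z N) this
      · right; exact hzx
    rcases hyx with h1 | h1
    · exact ⟨y, hyU, h1⟩
    · exact ⟨z, hz, h1⟩
  unfold IsMeagre
  exact residual_of_dense_open (isOpen_compl_singleton) hd

lemma countable_isMeagre {s : Set Cantor} (hs : s.Countable) : IsMeagre s := by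
  rcases s.eq_empty_or_nonempty with rfl | hne
  · exact IsMeagre.empty
  obtain ⟨f, rfl⟩ := hs.exists_eq_range hne
  exact isMeagre_iUnion' (fun n => isMeagre_singleton (f n)) |>.mono
    (Set.range_eq_iUnion f).le

/-- The topological zero-one law for `E₀`-invariant Baire measurable sets. -/
lemma zero_one {S : Set Cantor} (hS : BaireMeasurableSet S)
    (hinv : ∀ α β : Cantor, E0 α β → α ∈ S → β ∈ S) :
    IsMeagre S ∨ IsMeagre Sᶜ := by
  obtain ⟨U, hUo, hSU⟩ := hS.residualEq_isOpen
  have hE : {x : Cantor | x ∈ S ↔ x ∈ U} ∈ residual Cantor := Filter.eventuallyEq_set.mp hSU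
  rcases U.eq_empty_or_nonempty with hUe | ⟨α, hα⟩
  · left
    unfold IsMeagre
    refine Filter.mem_of_superset hE ?_
    intro x hx
    simp only [Set.mem_setOf_eq, hUe, Set.mem_empty_iff_false, iff_false] at hx
    exact hx
  · right
    have hUS : IsMeagre (U \ S) := by
      unfold IsMeagre
      refine Filter.mem_of_superset hE ?_
      intro x hx hmem
      exact hmem.2 (hx.mpr hmem.1)
    obtain ⟨I, u, hu, hsub⟩ := isOpen_pi_iff.mp hUo α hα
    set N : ℕ := (I.sup id) + 1 with hN
    have hCU : {β : Cantor | ∀ i < N, β i = α i} ⊆ U := by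
      intro β hβ
      apply hsub
      intro i hi
      have hiN : i < N := by
        have : i ≤ I.sup id := Finset.le_sup (f := id) hi
        omega
      rw [hβ i hiN]
      exact (hu i hi).2
    have hCS : IsMeagre ({β : Cantor | ∀ i < N, β i = α i} \ S) :=
      hUS.mono (Set.diff_subset_diff_left hCU)
    set v : (Fin N → Fin 2) → Cantor :=
      fun σ i => if h : i < N then α i - σ ⟨i, h⟩ else 0 with hv
    have hsubc : Sᶜ ⊆ ⋃ σ : Fin N → Fin 2,
        transl (v σ) ⁻¹' ({β : Cantor | ∀ i < N, β i = α i} \ S) := by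
      intro β hβ
      rw [Set.mem_iUnion]
      refine ⟨fun j => β j, ?_, ?_⟩
      · intro i hi
        have h1 : ∀ x y : Fin 2, x + (y - x) = y := by decide
        simp only [transl, hv, dif_pos hi]
        exact h1 (β i) (α i)
      · intro hmem
        apply hβ
        refine hinv _ β ⟨N, fun n hn => ?_⟩ hmem
        have h0 : ∀ x : Fin 2, x + 0 = x := by decide
        simp only [transl, hv, dif_neg (by omega : ¬ n < N)]
        exact h0 (β n)
    have : IsMeagre (⋃ σ : Fin N → Fin 2,
        transl (v σ) ⁻¹' ({β : Cantor | ∀ i < N, β i = α i} \ S)) :=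
      isMeagre_iUnion' fun σ =>
        hCS.preimage_of_isOpenMap (continuous_transl (v σ)) (translHomeo (v σ)).isOpenMap
    exact this.mono hsubc

end Aux

/-- `E₀*` is not smooth: there is no Borel map `g : 2^ℕ → ℝ` with
`α E₀* β ↔ g α = g β`. -/
theorem E0star_not_smooth :
    ¬ ∃ g : Cantor → ℝ, Measurable g ∧ ∀ α β : Cantor, E0star α β ↔ g α = g β := by
  rintro ⟨g, hg, hgi⟩
  have hne : Filter.NeBot (residual Cantor) := residual_neBot
  set B : ℚ → Set Cantor := fun q => {x | g x ≤ q} with hB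
  have hinv : ∀ (q : ℚ) (α β : Cantor), E0 α β → α ∈ B q → β ∈ B q := by
    intro q α β h hα
    have : g α = g β := (hgi α β).mp (Or.inl h)
    simpa [hB, ← this] using hα
  have hB01 : ∀ q, IsMeagre (B q) ∨ (B q) ∈ residual Cantor := by
    intro q
    rcases zero_one ((hg measurableSet_Iic).baireMeasurableSet) (hinv q) with h | h
    · exact Or.inl h
    · right
      unfold IsMeagre at h
      rwa [compl_compl] at h
  set M := {q : ℚ | IsMeagre (B q)} with hM
  have hM_lower : ∀ q' q : ℚ, q' ≤ q → q ∈ M → q' ∈ M := by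
    intro q' q hle hq
    refine hq.mono (fun x hx => ?_)
    simp only [hB, Set.mem_setOf_eq] at hx ⊢
    exact le_trans hx (by exact_mod_cast hle)
  have hM_ne : M.Nonempty := by
    by_contra h
    rw [Set.not_nonempty_iff_eq_empty] at h
    have hall : ∀ q, B q ∈ residual Cantor := by
      intro q
      refine (hB01 q).resolve_left ?_
      intro hm
      have hqM : q ∈ M := hm
      rw [h] at hqM
      exact hqM
    have hmem : (⋂ q : ℚ, B q) ∈ residual Cantor := (countable_iInter_mem).mpr hall
    have he : (⋂ q : ℚ, B q) = ∅ := by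
      ext x
      simp only [Set.mem_iInter, Set.mem_empty_iff_false, iff_false, not_forall]
      obtain ⟨q, hq⟩ := exists_rat_lt (g x)
      exact ⟨q, by simp [hB, not_le.mpr hq]⟩
    rw [he] at hmem
    simpa using (dense_of_mem_residual hmem).nonempty
  have hMc_ne : ∃ q₀ : ℚ, q₀ ∉ M := by
    by_contra h
    push_neg at h
    have hmeag : IsMeagre (⋃ q : ℚ, B q) := isMeagre_iUnion' h
    have he : (⋃ q : ℚ, B q) = Set.univ := by
      ext x
      simp only [Set.mem_iUnion, Set.mem_univ, iff_true]
      obtain ⟨q, hq⟩ := exists_rat_gt (g x)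
      exact ⟨q, hq.le⟩
    rw [he] at hmeag
    unfold IsMeagre at hmeag
    rw [Set.compl_univ] at hmeag
    simpa using (dense_of_mem_residual hmeag).nonempty
  obtain ⟨q₀, hq₀⟩ := hMc_ne
  have hbdd : BddAbove ((fun q : ℚ => (q : ℝ)) '' M) := by
    refine ⟨(q₀ : ℝ), ?_⟩
    rintro _ ⟨q, hq, rfl⟩
    by_contra hlt
    push_neg at hlt
    exact hq₀ (hM_lower q₀ q (by exact_mod_cast hlt.le) hq)
  have himg_ne : ((fun q : ℚ => (q : ℝ)) '' M).Nonempty := hM_ne.image _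
  set c : ℝ := sSup ((fun q : ℚ => (q : ℝ)) '' M) with hc
  have h_gt : ∀ q : ℚ, c < q → B q ∈ residual Cantor := by
    intro q hq
    refine (hB01 q).resolve_left ?_
    intro hmeag
    exact absurd hq (not_lt.mpr (le_csSup hbdd ⟨q, hmeag, rfl⟩))
  have h_lt : ∀ q : ℚ, (q : ℝ) < c → (B q)ᶜ ∈ residual Cantor := by
    intro q hq
    obtain ⟨_, ⟨r, hr, rfl⟩, hqr⟩ := exists_lt_of_lt_csSup himg_ne hq
    have h' : (q : ℝ) ≤ (r : ℝ) := by simpa using hqr.le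
    exact hM_lower q r (by exact_mod_cast h') hr
  set D : ℚ → Set Cantor :=
    fun q => if c < (q : ℝ) then B q else if (q : ℝ) < c then (B q)ᶜ else Set.univ with hD
  have hDres : ∀ q, D q ∈ residual Cantor := by
    intro q
    simp only [hD]
    split_ifs with h1 h2
    · exact h_gt q h1
    · exact h_lt q h2
    · exact Filter.univ_mem
  have hT : (⋂ q : ℚ, D q) ∈ residual Cantor := (countable_iInter_mem).mpr hDres
  have hTsub : (⋂ q : ℚ, D q) ⊆ {x : Cantor | g x = c} := by
    intro x hx
    simp only [Set.mem_iInter] at hx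
    have hle : g x ≤ c := by
      by_contra h
      push_neg at h
      obtain ⟨q, h1, h2⟩ := exists_rat_btwn h
      have hq := hx q
      simp only [hD, if_pos h1] at hq
      exact absurd (hq : g x ≤ q) (not_le.mpr h2)
    have hge : c ≤ g x := by
      by_contra h
      push_neg at h
      obtain ⟨q, h1, h2⟩ := exists_rat_btwn h
      have hq := hx q
      simp only [hD, if_neg (not_lt.mpr h2.le), if_pos h2] at hq
      exact hq h1.le
    exact le_antisymm hle hge
  have hR : {x : Cantor | g x = c} ∈ residual Cantor := Filter.mem_of_superset hT hTsub
  obtain ⟨α₀, hα₀⟩ := (dense_of_mem_residual hR).nonempty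
  have hclass : {x : Cantor | g x = c} = {β | E0 β α₀} ∪ {β | E0 β (cmpl α₀)} := by
    ext β
    simp only [Set.mem_setOf_eq, Set.mem_union]
    rw [show g β = c ↔ g β = g α₀ from by rw [hα₀], ← hgi β α₀]
    rfl
  have hcnt : {x : Cantor | g x = c}.Countable := by
    rw [hclass]
    exact (countable_E0class α₀).union (countable_E0class (cmpl α₀))
  have hmeag : IsMeagre {x : Cantor | g x = c} := countable_isMeagre hcnt
  have hcap : ({x : Cantor | g x = c} ∩ {x : Cantor | g x = c}ᶜ) ∈ residual Cantor :=
    Filter.inter_mem hR hmeag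
  rw [Set.inter_compl_self] at hcap
  simpa using (dense_of_mem_residual hcap).nonempty
end

section
/- The Knaster continuum H is a nonempty compact subset of ℝ². -/
lemma hset_closed (k : ℕ) : IsClosed (Hset k) := by
  rcases Nat.eq_zero_or_pos k with hk | hk
  · subst hk
    have h1 : Hset 0 = {p : ℝ × ℝ | 0 ≤ p.2} ∩
        (fun p : ℝ × ℝ => (p.1 - 1/2)^2 + p.2^2) ⁻¹'
          ((fun c : ℝ => (c - 1/2)^2) '' cantorSet) := by
      ext p
      simp only [Hset, if_pos rfl, Set.mem_setOf_eq, Set.mem_inter_iff, Set.mem_preimage,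
        Set.mem_image]
      constructor
      · rintro ⟨h, c, hc, he⟩; exact ⟨h, c, hc, he.symm⟩
      · rintro ⟨h, c, hc, he⟩; exact ⟨h, c, hc, he.symm⟩
    rw [h1]
    refine (isClosed_le continuous_const continuous_snd).inter ?_
    refine IsClosed.preimage (by continuity) ?_
    exact ((isCompact_cantorSet.image (by continuity)).isClosed)
  · have hk0 : k ≠ 0 := hk.ne'
    have h1 : Hset k = {p : ℝ × ℝ | p.2 ≤ 0} ∩
        (fun p : ℝ × ℝ => (p.1 - 5/(2*3^k))^2 + p.2^2) ⁻¹'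
          ((fun c : ℝ => (c - 5/(2*3^k))^2) '' (cantorSet ∩ Set.Icc ((2:ℝ)/3^k) (3/3^k))) := by
      ext p
      simp only [Hset, if_neg hk0, Set.mem_setOf_eq, Set.mem_inter_iff, Set.mem_preimage,
        Set.mem_image]
      constructor
      · rintro ⟨h, c, hc, he⟩; exact ⟨h, c, hc, he.symm⟩
      · rintro ⟨h, c, hc, he⟩; exact ⟨h, c, hc, he.symm⟩
    rw [h1]
    refine (isClosed_le continuous_snd continuous_const).inter ?_
    refine IsClosed.preimage (by continuity) ?_
    exact (((isCompact_cantorSet.inter_right isClosed_Icc).image (by continuity)).isClosed)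

lemma hset_bound {k : ℕ} (hk : k ≠ 0) : Hset k ⊆ Metric.closedBall 0 (3 / 3^k) := by
  intro p hp
  simp only [Hset, if_neg hk, Set.mem_setOf_eq] at hp
  obtain ⟨h2, c, ⟨hc, hc1, hc2⟩, he⟩ := hp
  have h3 : (0:ℝ) < 3^k := by positivity
  have hr : (c - 5/(2*3^k))^2 ≤ (1/(2*3^k))^2 := by
    rw [div_le_iff₀ h3] at hc1
    rw [le_div_iff₀ h3] at hc2
    have : (0:ℝ) < 2*3^k := by positivity
    have h5 : (5:ℝ)/(2*3^k) * (2*3^k) = 5 := by field_simp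
    have h1 : (1:ℝ)/(2*3^k) * (2*3^k) = 1 := by field_simp
    have h2t : (0:ℝ) < 2*3^k := by positivity
    have hcl : -(1/(2*(3:ℝ)^k)) ≤ c - 5/(2*3^k) := by nlinarith
    have hcu : c - 5/(2*(3:ℝ)^k) ≤ 1/(2*3^k) := by nlinarith
    exact sq_le_sq' hcl hcu
  have hd : (0:ℝ) < 1/(2*3^k) := by positivity
  have hx : |p.1 - 5/(2*3^k)| ≤ 1/(2*3^k) := by
    rw [abs_le]
    constructor <;> nlinarith [sq_nonneg (p.1 - 5/(2*3^k) + 1/(2*3^k)),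
      sq_nonneg (p.1 - 5/(2*3^k) - 1/(2*3^k)), sq_nonneg p.2]
  have hy : |p.2| ≤ 1/(2*3^k) := by
    rw [abs_le]
    constructor <;> nlinarith [sq_nonneg (p.2 + 1/(2*3^k)), sq_nonneg (p.2 - 1/(2*3^k)),
      sq_nonneg (p.1 - 5/(2*3^k))]
  rw [Metric.mem_closedBall, Prod.dist_eq]
  have e1 : dist p.1 (0:ℝ×ℝ).1 = |p.1| := by simp [Real.dist_eq]
  have e2 : dist p.2 (0:ℝ×ℝ).2 = |p.2| := by simp [Real.dist_eq]
  rw [e1, e2]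
  apply max_le
  · have := abs_abs_sub_abs_le_abs_sub p.1 (5/(2*3^k))
    have ha : |(5:ℝ)/(2*3^k)| = 5/(2*3^k) := abs_of_pos (by positivity)
    calc |p.1| ≤ |5/(2*3^k)| + |p.1 - 5/(2*3^k)| := by
          have := abs_sub_abs_le_abs_sub p.1 (5/(2*3^k)); linarith [abs_nonneg (p.1 - 5/(2*3^k))]
      _ ≤ 5/(2*3^k) + 1/(2*3^k) := by rw [ha]; linarith
      _ = 3/3^k := by field_simp; ring
  · calc |p.2| ≤ 1/(2*3^k) := hy
      _ ≤ 3/3^k := by rw [div_le_div_iff₀ (by positivity) h3]; nlinarith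

/-- The Knaster continuum `H` is a nonempty compact subset of `ℝ²`. -/
theorem knasterH_nonempty_compact : knasterH.Nonempty ∧ IsCompact knasterH := by
  have hmem0 : ((0:ℝ), (0:ℝ)) ∈ Hset 0 := by
    simp only [Hset, if_pos rfl, Set.mem_setOf_eq]
    exact ⟨le_refl 0, 0, zero_mem_cantorSet, by norm_num⟩
  have hne : knasterH.Nonempty := ⟨(0, 0), Set.mem_iUnion.mpr ⟨0, hmem0⟩⟩
  refine ⟨hne, ?_⟩
  rw [Metric.isCompact_iff_isClosed_bounded]
  constructor
  · -- closed
    refine isClosed_of_closure_subset ?_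
    intro p hp
    by_cases hp0 : p = 0
    · subst hp0; exact Set.mem_iUnion.mpr ⟨0, hmem0⟩
    · have hε : 0 < ‖p‖ := norm_pos_iff.mpr hp0
      obtain ⟨N, hN⟩ := pow_unbounded_of_one_lt (3 / ‖p‖) (by norm_num : (1:ℝ) < 3)
      set A : Set (ℝ × ℝ) := ⋃ k ∈ Finset.range (N+1), Hset k with hA
      have hAclosed : IsClosed A := by
        apply Set.Finite.isClosed_biUnion (Finset.finite_toSet _)
        intro k _; exact hset_closed k
      set r : ℝ := 3 / 3^(N+1) with hr
      have hrp : r < ‖p‖ := by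
        rw [hr, div_lt_iff₀ (by positivity)]
        have : 3 / ‖p‖ < 3^(N+1) := lt_of_lt_of_le hN (pow_le_pow_right₀ (by norm_num) (Nat.le_succ N))
        rw [div_lt_iff₀ hε] at this
        linarith
      have hsub : knasterH ⊆ A ∪ Metric.closedBall 0 r := by
        intro q hq
        obtain ⟨k, hk⟩ := Set.mem_iUnion.mp hq
        by_cases hkN : k ≤ N
        · exact Or.inl (Set.mem_biUnion (Finset.mem_range.mpr (Nat.lt_succ_of_le hkN)) hk)
        · right
          have hk0 : k ≠ 0 := by omega
          have := hset_bound hk0 hk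
          refine Metric.closedBall_subset_closedBall ?_ this
          rw [hr]
          exact div_le_div_of_nonneg_left (by norm_num) (by positivity)
            (pow_le_pow_right₀ (by norm_num) (by omega))
      have hcl : closure knasterH ⊆ A ∪ Metric.closedBall 0 r := by
        rw [← (hAclosed.union Metric.isClosed_closedBall).closure_eq]
        exact closure_mono hsub
      rcases hcl hp with h | h
      · obtain ⟨k, _, hk⟩ := Set.mem_iUnion₂.mp h
        exact Set.mem_iUnion.mpr ⟨k, hk⟩
      · exfalso
        rw [Metric.mem_closedBall, dist_zero_right] at h
        linarith
  · -- bounded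
    apply Bornology.IsBounded.subset (Metric.isBounded_closedBall (x := (0:ℝ×ℝ)) (r := 3))
    intro p hp
    obtain ⟨k, hk⟩ := Set.mem_iUnion.mp hp
    by_cases hk0 : k = 0
    · subst hk0
      simp only [Hset, if_pos rfl, Set.mem_setOf_eq] at hk
      obtain ⟨h2, c, hc, he⟩ := hk
      obtain ⟨hc0, hc1⟩ := cantorSet_subset_unitInterval hc
      have hr : (c - 1/2)^2 ≤ (1/2)^2 := by nlinarith
      have hx : |p.1 - 1/2| ≤ 1/2 := by
        rw [abs_le]; constructor <;> nlinarith [sq_nonneg p.2]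
      have hy : |p.2| ≤ 1/2 := by
        rw [abs_le]; constructor <;> nlinarith [sq_nonneg (p.1 - 1/2)]
      rw [Metric.mem_closedBall, Prod.dist_eq]
      have e1 : dist p.1 (0:ℝ×ℝ).1 = |p.1| := by simp [Real.dist_eq]
      have e2 : dist p.2 (0:ℝ×ℝ).2 = |p.2| := by simp [Real.dist_eq]
      rw [e1, e2]
      apply max_le
      · have := abs_sub_abs_le_abs_sub p.1 (1/2 : ℝ)
        have : |p.1| ≤ |(1/2:ℝ)| + |p.1 - 1/2| := by linarith
        rw [abs_of_pos (by norm_num : (0:ℝ) < 1/2)] at this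
        linarith
      · linarith
    · have := hset_bound hk0 hk
      refine Metric.closedBall_subset_closedBall ?_ this
      have h3 : (1:ℝ) ≤ 3^k := one_le_pow₀ (by norm_num : (1:ℝ) ≤ 3)
      rw [div_le_iff₀ (by positivity)]
      nlinarith
end

section
/- For every n ∈ ℕ and all α, β ∈ 2^ℕ, if α Fₙ β or α Fₙ β̄, then ψ(α) and ψ(β) are joined by a path inside the Knaster continuum H, i.e. JoinedIn H (ψ α) (ψ β). -/
open Real Set

/-! ### Auxiliary facts about binary digits -/

lemma fin2_cases (a : Fin 2) : a = 0 ∨ a = 1 := by fin_cases a <;> simp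

lemma fin2_sub_sub : ∀ a : Fin 2, 1 - (1 - a) = a := by decide

lemma fin2_cast_nonneg (a : Fin 2) : (0:ℝ) ≤ (a:ℝ) := by fin_cases a <;> norm_num

lemma fin2_cast_le_one (a : Fin 2) : (a:ℝ) ≤ 1 := by fin_cases a <;> norm_num

lemma fin2_cast_cmpl (a : Fin 2) : ((1 - a : Fin 2) : ℝ) = 1 - (a : ℝ) := by
  fin_cases a <;> norm_num

/-! ### The x-coordinate of `psi` -/

noncomputable def xval (α : Cantor) : ℝ := (psi α).1

lemma psi_eq (α : Cantor) : psi α = (xval α, 0) := rfl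

lemma xval_def (α : Cantor) : xval α = ∑' i : ℕ, 2 * (α i : ℝ) / 3^(i+1) := rfl

lemma summable_xval (α : Cantor) : Summable (fun i : ℕ => 2 * (α i : ℝ) / 3^(i+1)) := by
  have hg : Summable (fun i : ℕ => (2/3) * (1/3 : ℝ)^i) :=
    (summable_geometric_of_lt_one (by norm_num) (by norm_num)).mul_left _
  refine Summable.of_nonneg_of_le (fun i => by positivity) (fun i => ?_) hg
  · rw [show ((2:ℝ)/3) * (1/3)^i = 2/3^(i+1) by rw [pow_succ, one_div_pow]; ring]
    have h1 : (α i : ℝ) ≤ 1 := fin2_cast_le_one _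
    have h2 : (0:ℝ) < 3^(i+1) := by positivity
    rw [div_le_div_iff₀ h2 h2]
    nlinarith

lemma tsum_geom : ∑' i : ℕ, (2:ℝ)/3^(i+1) = 1 := by
  have : ∀ i : ℕ, (2:ℝ)/3^(i+1) = (2/3) * (1/3)^i := fun i => by rw [pow_succ, one_div_pow]; ring
  rw [tsum_congr this, tsum_mul_left, tsum_geometric_of_lt_one (by norm_num) (by norm_num)]
  norm_num

lemma xval_nonneg (α : Cantor) : 0 ≤ xval α := by
  rw [xval_def]
  exact tsum_nonneg (fun i => by positivity)

lemma xval_add_cmpl (α : Cantor) : xval α + xval (cmpl α) = 1 := by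
  rw [xval_def, xval_def, ← Summable.tsum_add (summable_xval α) (summable_xval (cmpl α))]
  rw [← tsum_geom]
  apply tsum_congr
  intro i
  have : ((cmpl α i : Fin 2) : ℝ) = 1 - (α i : ℝ) := fin2_cast_cmpl _
  rw [this]
  ring

lemma xval_le_one (α : Cantor) : xval α ≤ 1 := by
  have := xval_add_cmpl α
  have := xval_nonneg (cmpl α)
  linarith

lemma xval_shift (α : Cantor) :
    xval α = (2 * (α 0 : ℝ) + xval (fun i => α (i+1))) / 3 := by
  rw [xval_def, Summable.tsum_eq_zero_add (summable_xval α)]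
  have : ∀ i : ℕ, 2 * (α (i+1) : ℝ) / 3^(i+1+1) = (2 * (α (i+1) : ℝ) / 3^(i+1)) / 3 := by
    intro i; rw [pow_succ]; ring
  rw [tsum_congr this, tsum_div_const, xval_def]
  ring

lemma xval_mem_preCantorSet (n : ℕ) : ∀ α : Cantor, xval α ∈ preCantorSet n := by
  induction n with
  | zero => exact fun α => ⟨xval_nonneg α, xval_le_one α⟩
  | succ n ih =>
    intro α
    rcases fin2_cases (α 0) with h | h
    · exact Or.inl ⟨xval (fun i => α (i+1)), ih _, by rw [xval_shift α, h]; norm_num⟩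
    · exact Or.inr ⟨xval (fun i => α (i+1)), ih _, by rw [xval_shift α, h]; norm_num⟩

lemma xval_mem_cantorSet (α : Cantor) : xval α ∈ cantorSet :=
  Set.mem_iInter.mpr (fun n => xval_mem_preCantorSet n α)

lemma xval_prefix : ∀ (k : ℕ) (α : Cantor), (∀ i < k, α i = 0) → α k = 1 →
    xval α = (2 + xval (fun i => α (i + (k+1)))) / 3^(k+1) := by
  intro k
  induction k with
  | zero =>
    intro α _ h1
    rw [xval_shift α, h1]
    norm_num
  | succ k ih =>
    intro α h0 h1
    have hα0 : α 0 = 0 := h0 0 (Nat.succ_pos k)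
    have := ih (fun i => α (i+1)) (fun i hi => h0 (i+1) (by omega)) h1
    rw [xval_shift α, hα0, this]
    have h2 : (fun i => (fun i => α (i+1)) (i + (k + 1))) = (fun i => α (i + (k + 1 + 1))) :=
      funext fun i => congrArg α (by omega)
    rw [h2, pow_succ]
    norm_num
    ring

/-! ### Semicircle paths -/

lemma joinedIn_semicircle (S : Set (ℝ × ℝ)) (m a ε : ℝ)
    (hmem : ∀ t : ℝ, t ∈ Icc (0:ℝ) 1 →
      ((m + (a - m) * Real.cos (π * t), ε * |a - m| * Real.sin (π * t)) : ℝ × ℝ) ∈ S) :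
    JoinedIn S (a, 0) (2*m - a, 0) := by
  refine ⟨⟨⟨fun t => (m + (a - m) * Real.cos (π * t), ε * |a - m| * Real.sin (π * t)),
      by fun_prop⟩, ?_, ?_⟩, fun t => hmem t t.2⟩
  · simp
  · simp [Real.cos_pi, Real.sin_pi]
    ring

/-! ### The two moves -/

lemma joined_T (α : Cantor) : JoinedIn knasterH (psi α) (psi (cmpl α)) := by
  have h2 : psi (cmpl α) = (2*(1/2) - xval α, 0) := by
    rw [psi_eq]
    have := xval_add_cmpl α
    norm_num
    linarith
  rw [psi_eq, h2]
  apply joinedIn_semicircle knasterH (1/2) (xval α) 1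
  intro t ht
  apply Set.mem_iUnion.mpr ⟨0, ?_⟩
  have hsin : 0 ≤ Real.sin (π * t) := Real.sin_nonneg_of_nonneg_of_le_pi
    (mul_nonneg Real.pi_pos.le ht.1) (by nlinarith [Real.pi_pos, ht.2])
  rw [show Hset 0 = {p : ℝ × ℝ | 0 ≤ p.2 ∧
      ∃ c ∈ cantorSet, (p.1 - 1/2)^2 + p.2^2 = (c - 1/2)^2} from rfl, Set.mem_setOf_eq]
  constructor
  · exact mul_nonneg (by positivity) hsin
  · refine ⟨xval α, xval_mem_cantorSet α, ?_⟩
    have := Real.sin_sq_add_cos_sq (π * t)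
    have := sq_abs (xval α - 1/2)
    nlinarith

lemma joined_B (k : ℕ) (α β : Cantor) (h0 : ∀ i < k, α i = 0) (h1 : α k = 1)
    (hlo : ∀ i ≤ k, β i = α i) (hhi : ∀ i, k < i → β i = 1 - α i) :
    JoinedIn knasterH (psi α) (psi β) := by
  set τ : Cantor := fun i => α (i + (k+1)) with hτ
  have hxα : xval α = (2 + xval τ) / 3^(k+1) := xval_prefix k α h0 h1
  have hcτ : xval (cmpl τ) = 1 - xval τ := by have := xval_add_cmpl τ; linarith
  have hxβ : xval β = (3 - xval τ) / 3^(k+1) := by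
    have hb0 : ∀ i < k, β i = 0 := fun i hi => (hlo i hi.le).trans (h0 i hi)
    have hb1 : β k = 1 := (hlo k le_rfl).trans h1
    have := xval_prefix k β hb0 hb1
    have h2 : (fun i => β (i + (k+1))) = cmpl τ := by
      funext i
      have := hhi (i + (k+1)) (by omega)
      simp [cmpl, hτ, this]
    rw [h2, hcτ] at this
    rw [this]; ring
  have hτ0 : 0 ≤ xval τ := xval_nonneg τ
  have hτ1 : xval τ ≤ 1 := xval_le_one τ
  have h3 : (0:ℝ) < 3^(k+1) := by positivity
  have hψβ : psi β = (2 * (5/(2*3^(k+1))) - xval α, 0) := by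
    rw [psi_eq, hxα, hxβ]
    have : (3 - xval τ) / 3^(k+1) = 2 * (5/(2*3^(k+1))) - (2 + xval τ) / 3^(k+1) := by
      field_simp; ring
    rw [this]
  rw [psi_eq, hψβ]
  apply joinedIn_semicircle knasterH (5/(2*3^(k+1))) (xval α) (-1)
  intro t ht
  have hsin : 0 ≤ Real.sin (π * t) := Real.sin_nonneg_of_nonneg_of_le_pi
    (mul_nonneg Real.pi_pos.le ht.1) (by nlinarith [Real.pi_pos, ht.2])
  apply Set.mem_iUnion.mpr ⟨k+1, ?_⟩
  rw [show Hset (k+1) = {p : ℝ × ℝ | p.2 ≤ 0 ∧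
      ∃ c ∈ cantorSet ∩ Set.Icc ((2:ℝ)/3^(k+1)) (3/3^(k+1)),
      (p.1 - 5/(2*3^(k+1)))^2 + p.2^2 = (c - 5/(2*3^(k+1)))^2} from rfl, Set.mem_setOf_eq]
  refine ⟨by nlinarith [mul_nonneg (abs_nonneg (xval α - 5/(2*3^(k+1)))) hsin], ?_⟩
  refine ⟨xval α, ⟨xval_mem_cantorSet α, ?_, ?_⟩, ?_⟩
  · rw [hxα]; gcongr; linarith
  · rw [hxα]; gcongr <;> linarith
  · have := Real.sin_sq_add_cos_sq (π * t)
    have := sq_abs (xval α - 5/(2*3^(k+1)))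
    nlinarith

/-! ### The main induction -/

lemma psi_mem_knasterH (α : Cantor) : psi α ∈ knasterH := by
  apply Set.mem_iUnion.mpr ⟨0, ?_⟩
  simp only [Hset, if_pos rfl, Set.mem_setOf_eq, psi_eq]
  exact ⟨le_refl 0, xval α, xval_mem_cantorSet α, by ring⟩

lemma joined_Frel : ∀ (n : ℕ) (α β : Cantor), Frel n α β →
    JoinedIn knasterH (psi α) (psi β) := by
  intro n
  induction n with
  | zero =>
    intro α β h
    have : α = β := funext fun i => h i (Nat.zero_le i)
    rw [this]
    exact JoinedIn.refl (psi_mem_knasterH β)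
  | succ n ih =>
    intro α β h
    by_cases hc : α n = β n
    · refine ih α β (fun i hi => ?_)
      rcases eq_or_lt_of_le hi with h' | h'
      · rw [← h']; exact hc
      · exact h i h'
    · have key : ∀ γ δ : Cantor, Frel (n+1) γ δ → γ n = 0 → δ n = 1 →
          JoinedIn knasterH (psi γ) (psi δ) := by
        intro γ δ hγδ hγ hδ
        set γ' : Cantor := fun i => if i < n then 0 else if i = n then 1 else γ i with hγ'
        set γ'' : Cantor := fun i => if i < n then 0 else if i = n then 1 else 1 - γ i with hγ''
        have j1 : JoinedIn knasterH (psi γ) (psi (cmpl γ)) := joined_T γ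
        have j2 : JoinedIn knasterH (psi (cmpl γ)) (psi γ'') := by
          refine ih _ _ (fun i hi => ?_)
          rcases eq_or_lt_of_le hi with h' | h'
          · simp [cmpl, hγ'', ← h', hγ]
          · have e1 : ¬ i < n := by omega
            have e2 : i ≠ n := by omega
            simp [cmpl, hγ'', e1, e2]
        have j3 : JoinedIn knasterH (psi γ'') (psi γ') := by
          refine joined_B n γ'' γ' (fun i hi => by simp [hγ'', hi]) (by simp [hγ''])
            (fun i hi => ?_) (fun i hi => ?_)
          · rcases eq_or_lt_of_le hi with h' | h'
            · simp [hγ', hγ'', h']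
            · simp [hγ', hγ'', h']
          · have e1 : ¬ i < n := by omega
            have e2 : i ≠ n := by omega
            simp [hγ', hγ'', e1, e2, fin2_sub_sub]
        have j4 : JoinedIn knasterH (psi γ') (psi δ) := by
          refine ih _ _ (fun i hi => ?_)
          rcases eq_or_lt_of_le hi with h' | h'
          · simp [hγ', ← h', hδ]
          · have e1 : ¬ i < n := by omega
            have e2 : i ≠ n := by omega
            simp only [hγ', if_neg e1, if_neg e2]
            exact hγδ i h'
        exact ((j1.trans j2).trans j3).trans j4
      rcases fin2_cases (α n) with hα | hα
      · have hβ : β n = 1 := by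
          rcases fin2_cases (β n) with hβ | hβ
          · exact absurd (hα.trans hβ.symm) hc
          · exact hβ
        exact key α β h hα hβ
      · have hβ : β n = 0 := by
          rcases fin2_cases (β n) with hβ | hβ
          · exact hβ
          · exact absurd (hα.trans hβ.symm) hc
        exact (key β α (fun i hi => (h i hi).symm) hβ hα).symm

/-- If `α Fₙ β` or `α Fₙ β̄` then `ψ α` and `ψ β` are joined by a path
inside the Knaster continuum `H`. -/
theorem psi_joinedIn_of_Frel :
    ∀ n : ℕ, ∀ α β : Cantor, (Frel n α β ∨ Frel n α (cmpl β)) →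
      JoinedIn knasterH (psi α) (psi β) := by
  intro n α β h
  rcases h with h | h
  · exact joined_Frel n α β h
  · have hcc : cmpl (cmpl β) = β := funext fun i => fin2_sub_sub _
    have := joined_T (cmpl β)
    rw [hcc] at this
    exact (joined_Frel n α (cmpl β) h).trans this
end
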